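/- Let f : ℕ → ℝ be a function (an arithmetic function) for which there exist constants C > 0 and d ∈ ℕ with |f(n)| ≤ C·n^d for all n ≥ 1. Then for every real number x with 0 < x < 1, we have ∏_{n=1}^{∞} (1 - x^n)^{-f(n)/n} = exp( ∑_{n=1}^{∞} ((1 * f)(n)/n) · x^n ), where (1 * f)(n) = ∑_{d | n} f(d) denotes the Dirichlet convolution of the constant function 1 with f. -/

import Mathlib

open Filter Real

private def fibEquivPESDS (j : ℕ) : {p : ℕ × ℕ // p ∈ (j + 1).divisorsAntidiagonal} ≃
    ((fun p : ℕ × ℕ => (p.1 + 1) * (p.2 + 1) - 1) ⁻¹' {j}) where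
  toFun p := ⟨(p.1.1 - 1, p.1.2 - 1), by
    obtain ⟨h1, h2⟩ := Nat.mem_divisorsAntidiagonal.mp p.2
    have ha : 1 ≤ p.1.1 := Nat.one_le_iff_ne_zero.mpr (by
      intro h; rw [h, zero_mul] at h1; exact (Nat.succ_ne_zero j) h1.symm)
    have hb : 1 ≤ p.1.2 := Nat.one_le_iff_ne_zero.mpr (by
      intro h; rw [h, mul_zero] at h1; exact (Nat.succ_ne_zero j) h1.symm)
    simp only [Set.mem_preimage, Set.mem_singleton_iff]
    rw [Nat.sub_add_cancel ha, Nat.sub_add_cancel hb, h1]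
    rfl⟩
  invFun q := ⟨(q.1.1 + 1, q.1.2 + 1), by
    have hq : (q.1.1 + 1) * (q.1.2 + 1) - 1 = j := q.2
    have hpos : 1 ≤ (q.1.1 + 1) * (q.1.2 + 1) := Nat.mul_pos (Nat.succ_pos _) (Nat.succ_pos _)
    rw [Nat.mem_divisorsAntidiagonal]
    refine ⟨?_, Nat.succ_ne_zero j⟩
    show (q.1.1 + 1) * (q.1.2 + 1) = j + 1
    omega⟩
  left_inv p := by
    obtain ⟨h1, h2⟩ := Nat.mem_divisorsAntidiagonal.mp p.2
    have ha : 1 ≤ p.1.1 := Nat.one_le_iff_ne_zero.mpr (by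
      intro h; rw [h, zero_mul] at h1; exact (Nat.succ_ne_zero j) h1.symm)
    have hb : 1 ≤ p.1.2 := Nat.one_le_iff_ne_zero.mpr (by
      intro h; rw [h, mul_zero] at h1; exact (Nat.succ_ne_zero j) h1.symm)
    apply Subtype.ext
    simp only
    rw [Nat.sub_add_cancel ha, Nat.sub_add_cancel hb]
  right_inv q := by
    apply Subtype.ext
    simp only [Nat.add_sub_cancel]

private theorem fiber_sum_PESDS (G : ℕ × ℕ → ℝ) (j : ℕ) :
    ∑' (c : (fun p : ℕ × ℕ => (p.1 + 1) * (p.2 + 1) - 1) ⁻¹' {j}), G c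
      = ∑ p ∈ (j + 1).divisorsAntidiagonal, G (p.1 - 1, p.2 - 1) := by
  rw [← Equiv.tsum_eq (fibEquivPESDS j) (fun c => G c)]
  rw [← Finset.tsum_subtype ((j + 1).divisorsAntidiagonal) (fun p => G (p.1 - 1, p.2 - 1))]
  exact tsum_congr fun p => rfl

private theorem finsum_comp_PESDS (f : ℕ → ℝ) (x : ℝ) (j : ℕ) :
    ∑ p ∈ (j + 1).divisorsAntidiagonal,
      (f ((p.1 - 1) + 1) / (((p.1 - 1 : ℕ) : ℝ) + 1)) *
        ((x ^ ((p.1 - 1) + 1)) ^ ((p.2 - 1) + 1) / (((p.2 - 1 : ℕ) : ℝ) + 1))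
      = ((∑ d ∈ (j + 1).divisors, f d) / ((j : ℝ) + 1)) * x ^ (j + 1) := by
  have hterm : ∀ p ∈ (j + 1).divisorsAntidiagonal,
      (f ((p.1 - 1) + 1) / (((p.1 - 1 : ℕ) : ℝ) + 1)) *
        ((x ^ ((p.1 - 1) + 1)) ^ ((p.2 - 1) + 1) / (((p.2 - 1 : ℕ) : ℝ) + 1))
      = f p.1 * x ^ (j + 1) / ((j : ℝ) + 1) := by
    intro p hp
    obtain ⟨h1, h2⟩ := Nat.mem_divisorsAntidiagonal.mp hp
    have ha : 1 ≤ p.1 := Nat.one_le_iff_ne_zero.mpr (by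
      intro h; rw [h, zero_mul] at h1; exact (Nat.succ_ne_zero j) h1.symm)
    have hb : 1 ≤ p.2 := Nat.one_le_iff_ne_zero.mpr (by
      intro h; rw [h, mul_zero] at h1; exact (Nat.succ_ne_zero j) h1.symm)
    have hc1 : ((p.1 - 1 : ℕ) : ℝ) + 1 = (p.1 : ℝ) := by
      have := congrArg (Nat.cast : ℕ → ℝ) (Nat.sub_add_cancel ha)
      push_cast at this
      linarith
    have hc2 : ((p.2 - 1 : ℕ) : ℝ) + 1 = (p.2 : ℝ) := by
      have := congrArg (Nat.cast : ℕ → ℝ) (Nat.sub_add_cancel hb)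
      push_cast at this
      linarith
    have hcast : (p.1 : ℝ) * (p.2 : ℝ) = (j : ℝ) + 1 := by
      have := congrArg (Nat.cast : ℕ → ℝ) h1
      push_cast at this
      linarith
    rw [Nat.sub_add_cancel ha, Nat.sub_add_cancel hb, hc1, hc2, ← pow_mul, h1,
      div_mul_div_comm, hcast]
  rw [Finset.sum_congr rfl hterm,
    Nat.sum_divisorsAntidiagonal (fun a b => f a * x ^ (j + 1) / ((j : ℝ) + 1)),
    ← Finset.sum_div, ← Finset.sum_mul, div_mul_eq_mul_div]

private theorem summable_PESDS (f : ℕ → ℝ) (C : ℝ) (hC : 0 < C) (d : ℕ)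
    (hf : ∀ n : ℕ, 1 ≤ n → |f n| ≤ C * (n : ℝ) ^ d)
    (x : ℝ) (hx0 : 0 < x) (hx1 : x < 1) :
    Summable (fun p : ℕ × ℕ =>
      (f (p.1 + 1) / ((p.1 : ℝ) + 1)) * ((x ^ (p.1 + 1)) ^ (p.2 + 1) / ((p.2 : ℝ) + 1))) := by
  have hxp : ∀ n : ℕ, 0 < x ^ (n + 1) := fun n => pow_pos hx0 _
  have hxl : ∀ n : ℕ, x ^ (n + 1) < 1 := fun n => pow_lt_one₀ hx0.le hx1 (Nat.succ_ne_zero n)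
  set H : ℕ × ℕ → ℝ := fun p => C * ((p.1 : ℝ) + 1) ^ d * (x ^ (p.1 + 1)) ^ (p.2 + 1) with hH
  have hHnn : ∀ p, 0 ≤ H p := fun p => by positivity
  have hslice : ∀ n : ℕ, Summable (fun k : ℕ => H (n, k)) := by
    intro n
    have : Summable (fun k : ℕ => (x ^ (n + 1)) ^ k) :=
      summable_geometric_of_lt_one (hxp n).le (hxl n)
    have := (this.mul_left (C * ((n : ℝ) + 1) ^ d * x ^ (n + 1)))
    refine this.congr fun k => ?_
    simp only [hH]
    ring
  have hsliceSum : ∀ n : ℕ, ∑' k : ℕ, H (n, k)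
      = C * ((n : ℝ) + 1) ^ d * x ^ (n + 1) * (1 - x ^ (n + 1))⁻¹ := by
    intro n
    have h1 : ∀ k : ℕ, H (n, k) = (C * ((n : ℝ) + 1) ^ d * x ^ (n + 1)) * (x ^ (n + 1)) ^ k := by
      intro k; simp only [hH]; ring
    rw [tsum_congr h1, tsum_mul_left, tsum_geometric_of_lt_one (hxp n).le (hxl n)]
  have hHsum : Summable H := by
    rw [summable_prod_of_nonneg hHnn]
    refine ⟨hslice, ?_⟩
    have hmaj : Summable (fun n : ℕ => (C * (1 - x)⁻¹) * (((n : ℝ) + 1) ^ d * x ^ (n + 1))) := by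
      have h0 : Summable (fun n : ℕ => ((n : ℝ)) ^ d * x ^ n) := by
        have := summable_pow_mul_geometric_of_norm_lt_one (R := ℝ) d (r := x)
          (by rwa [Real.norm_eq_abs, abs_of_pos hx0])
        exact this
      have h1 : Summable (fun n : ℕ => ((n + 1 : ℕ) : ℝ) ^ d * x ^ (n + 1)) :=
        (summable_nat_add_iff (f := fun n : ℕ => ((n : ℝ)) ^ d * x ^ n) 1).mpr h0
      refine (h1.congr ?_).mul_left _
      intro n; push_cast; ring
    refine Summable.of_nonneg_of_le (fun n => ?_) (fun n => ?_) hmaj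
    · exact tsum_nonneg fun k => hHnn _
    · rw [hsliceSum n]
      have hle : (1 - x ^ (n + 1))⁻¹ ≤ (1 - x)⁻¹ := by
        have : x ^ (n + 1) ≤ x := pow_le_of_le_one hx0.le hx1.le (Nat.succ_ne_zero n)
        gcongr
      calc C * ((n : ℝ) + 1) ^ d * x ^ (n + 1) * (1 - x ^ (n + 1))⁻¹
          ≤ C * ((n : ℝ) + 1) ^ d * x ^ (n + 1) * (1 - x)⁻¹ := by
            have : (0:ℝ) ≤ C * ((n : ℝ) + 1) ^ d * x ^ (n + 1) := by positivity
            exact mul_le_mul_of_nonneg_left hle this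
        _ = C * (1 - x)⁻¹ * (((n : ℝ) + 1) ^ d * x ^ (n + 1)) := by ring
  refine Summable.of_abs (Summable.of_nonneg_of_le (fun p => abs_nonneg _) (fun p => ?_) hHsum)
  rw [abs_mul, abs_div, abs_div]
  have h1 : |f (p.1 + 1)| / |((p.1 : ℝ) + 1)| ≤ C * ((p.1 : ℝ) + 1) ^ d := by
    rw [abs_of_pos (by positivity : (0:ℝ) < (p.1 : ℝ) + 1)]
    calc |f (p.1 + 1)| / ((p.1 : ℝ) + 1) ≤ |f (p.1 + 1)| :=
          div_le_self (abs_nonneg _) (by linarith [Nat.cast_nonneg (α := ℝ) p.1])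
      _ ≤ C * ((p.1 + 1 : ℕ) : ℝ) ^ d := hf (p.1 + 1) (Nat.le_add_left 1 p.1)
      _ = C * ((p.1 : ℝ) + 1) ^ d := by push_cast; ring
  have h2 : |(x ^ (p.1 + 1)) ^ (p.2 + 1)| / |((p.2 : ℝ) + 1)| ≤ (x ^ (p.1 + 1)) ^ (p.2 + 1) := by
    rw [abs_of_pos (by positivity : (0:ℝ) < (p.2 : ℝ) + 1),
      abs_of_pos (pow_pos (hxp p.1) _)]
    exact div_le_self (by positivity) (by linarith [Nat.cast_nonneg (α := ℝ) p.2])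
  calc |f (p.1 + 1)| / |((p.1 : ℝ) + 1)| * (|(x ^ (p.1 + 1)) ^ (p.2 + 1)| / |((p.2 : ℝ) + 1)|)
      ≤ (C * ((p.1 : ℝ) + 1) ^ d) * ((x ^ (p.1 + 1)) ^ (p.2 + 1)) := by
        refine mul_le_mul h1 h2 ?_ ?_
        · positivity
        · positivity
    _ = H p := rfl

/-- For an arithmetic function `f` of polynomial growth and 0 < x < 1,
∏_{n=1}^∞ (1 - x^n)^(-f(n)/n) = exp(∑_{n=1}^∞ ((1*f)(n)/n) x^n), where
(1*f)(n) = ∑_{d ∣ n} f(d). -/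
theorem product_eq_exp_divisor_sum (f : ℕ → ℝ) (C : ℝ) (hC : 0 < C) (d : ℕ)
    (hf : ∀ n : ℕ, 1 ≤ n → |f n| ≤ C * (n : ℝ) ^ d)
    (x : ℝ) (hx0 : 0 < x) (hx1 : x < 1) :
    Filter.Tendsto
      (fun N : ℕ => ∏ n ∈ Finset.Icc 1 N, (1 - x ^ n) ^ (-(f n) / (n : ℝ)))
      Filter.atTop
      (nhds (Real.exp (∑' n : ℕ,
        ((∑ d ∈ Nat.divisors (n + 1), f d) / (n + 1 : ℝ)) * x ^ (n + 1)))) := by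
  have hxp : ∀ n : ℕ, 0 < x ^ (n + 1) := fun n => pow_pos hx0 _
  have hxl : ∀ n : ℕ, x ^ (n + 1) < 1 := fun n => pow_lt_one₀ hx0.le hx1 (Nat.succ_ne_zero n)
  set G : ℕ × ℕ → ℝ := fun p =>
    (f (p.1 + 1) / ((p.1 : ℝ) + 1)) * ((x ^ (p.1 + 1)) ^ (p.2 + 1) / ((p.2 : ℝ) + 1)) with hGdef
  have hGsum : Summable G := summable_PESDS f C hC d hf x hx0 hx1
  set L : ℕ → ℝ := fun n => (f (n + 1) / ((n : ℝ) + 1)) * -Real.log (1 - x ^ (n + 1)) with hLdef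
  have hL : ∀ n : ℕ, HasSum (fun k => G (n, k)) (L n) := by
    intro n
    have habs : |x ^ (n + 1)| < 1 := by rw [abs_of_pos (hxp n)]; exact hxl n
    have h := (Real.hasSum_pow_div_log_of_abs_lt_one habs).mul_left (f (n + 1) / ((n : ℝ) + 1))
    refine h.congr_fun fun k => ?_
    simp only [hGdef]
  have hLsum : HasSum L (∑' p, G p) := hGsum.hasSum.prod_fiberwise hL
  -- the fiberwise sum
  have h_each : ∀ j : ℕ,
      (∑' (c : (fun p : ℕ × ℕ => (p.1 + 1) * (p.2 + 1) - 1) ⁻¹' {j}), G c)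
      = ((∑ d ∈ Nat.divisors (j + 1), f d) / ((j : ℝ) + 1)) * x ^ (j + 1) := by
    intro j
    rw [fiber_sum_PESDS G j]
    exact finsum_comp_PESDS f x j
  have hT : HasSum
      (fun j : ℕ => ((∑ d ∈ Nat.divisors (j + 1), f d) / ((j : ℝ) + 1)) * x ^ (j + 1))
      (∑' p, G p) := by
    have h := hGsum.hasSum.tsum_fiberwise (fun p : ℕ × ℕ => (p.1 + 1) * (p.2 + 1) - 1)
    simpa only [h_each] using h
  have hSeq : (∑' n : ℕ, ((∑ d ∈ Nat.divisors (n + 1), f d) / ((n : ℝ) + 1)) * x ^ (n + 1))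
      = ∑' p, G p := hT.tsum_eq
  -- partial products equal exp of partial sums
  have hprod : ∀ N : ℕ,
      ∏ n ∈ Finset.Icc 1 N, (1 - x ^ n) ^ (-(f n) / (n : ℝ))
        = Real.exp (∑ i ∈ Finset.range N, L i) := by
    intro N
    have hpos : ∀ n ∈ Finset.Icc 1 N, (0:ℝ) < 1 - x ^ n := by
      intro n hn
      have hn1 : 1 ≤ n := (Finset.mem_Icc.mp hn).1
      have : x ^ n ≤ x := pow_le_of_le_one hx0.le hx1.le (by omega)
      linarith
    have h1 : ∀ n ∈ Finset.Icc 1 N, (1 - x ^ n) ^ (-(f n) / (n : ℝ))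
        = Real.exp (Real.log (1 - x ^ n) * (-(f n) / (n : ℝ))) := by
      intro n hn
      exact Real.rpow_def_of_pos (hpos n hn) _
    rw [Finset.prod_congr rfl h1, ← Real.exp_sum]
    congr 1
    rw [← Finset.Ico_add_one_right_eq_Icc, Finset.sum_Ico_eq_sum_range]
    refine Finset.sum_congr rfl fun i _ => ?_
    rw [add_comm 1 i]
    simp only [hLdef]
    push_cast
    ring
  have key : Filter.Tendsto (fun N : ℕ => Real.exp (∑ i ∈ Finset.range N, L i))
      Filter.atTop (nhds (Real.exp (∑' p, G p))) :=
    (Real.continuous_exp.continuousAt.tendsto).comp hLsum.tendsto_sum_nat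
  rw [show Real.exp (∑' n : ℕ, ((∑ d ∈ Nat.divisors (n + 1), f d) / ((n:ℝ) + 1)) * x ^ (n + 1))
      = Real.exp (∑' p, G p) from by rw [hSeq]]
  exact key.congr fun N => (hprod N).symm
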